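/- Let f be a Laurent polynomial in n variables over a commutative ring R, p a prime, σ the Frobenius endomorphism on R[x₁^{±1},...,xₙ^{±1}] extending a Frobenius σ on R by σ(x_i) = x_i^p, and δ_s(f) defined recursively by f^(p^s - 1) = Σ_{i=1}^{s} δ_i(f)·σ^i(f^(p^{s-i}-1)). Then the Newton polytope of δ_s(f) is contained in (p^s − 1)·Δ(f), where Δ(f) is the Newton polytope of f. -/

import Mathlib

open Pointwise

section Aux

variable {R : Type*} [CommRing R] {n : ℕ}

/-- The cast of an integer exponent vector to `ℝⁿ`. -/
private def toRfun : (Fin n → ℤ) → (Fin n → ℝ) := fun w i => (w i : ℝ)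

/-- The Newton polytope. -/
private def NP (g : AddMonoidAlgebra R (Fin n → ℤ)) : Set (Fin n → ℝ) :=
  convexHull ℝ (toRfun '' g.coeff.support)

private lemma toRfun_add (a b : Fin n → ℤ) : toRfun (a + b) = toRfun a + toRfun b := by
  funext i; simp [toRfun]

private lemma toRfun_zsmul (p : ℕ) (u : Fin n → ℤ) :
    toRfun ((p : ℤ) • u) = (p : ℝ) • toRfun u := by
  funext i; simp [toRfun]

private lemma mem_NP {g : AddMonoidAlgebra R (Fin n → ℤ)} {u : Fin n → ℤ}
    (hu : u ∈ g.coeff.support) : toRfun u ∈ NP g :=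
  subset_convexHull ℝ _ (Set.mem_image_of_mem _ hu)

private lemma NP_convex (g : AddMonoidAlgebra R (Fin n → ℤ)) : Convex ℝ (NP g) :=
  convex_convexHull ℝ _

private lemma NP_mul (g h : AddMonoidAlgebra R (Fin n → ℤ)) :
    NP (g * h) ⊆ NP g + NP h := by
  classical
  refine convexHull_min ?_ ((NP_convex g).add (NP_convex h))
  rintro _ ⟨u, hu, rfl⟩
  obtain ⟨a, ha, b, hb, rfl⟩ := Finset.mem_add.mp (AddMonoidAlgebra.support_coeff_mul_subset g h hu)
  rw [toRfun_add]
  exact Set.add_mem_add (mem_NP ha) (mem_NP hb)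

private lemma NP_pow (f : AddMonoidAlgebra R (Fin n → ℤ)) :
    ∀ k : ℕ, 1 ≤ k → NP (f ^ k) ⊆ (k : ℝ) • NP f := by
  intro k hk
  induction k, hk using Nat.le_induction with
  | base => simp [one_smul]
  | succ k hk ih =>
      calc NP (f ^ (k + 1)) = NP (f ^ k * f) := by rw [pow_succ]
        _ ⊆ NP (f ^ k) + NP f := NP_mul _ _
        _ ⊆ (k : ℝ) • NP f + (1 : ℝ) • NP f := by
            rw [one_smul]; exact Set.add_subset_add ih subset_rfl
        _ = ((k : ℕ) + 1 : ℝ) • NP f := by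
            rw [(NP_convex f).add_smul (by positivity) zero_le_one]
        _ = ((k + 1 : ℕ) : ℝ) • NP f := by push_cast; ring_nf

private lemma NP_sigma {p : ℕ} {σ : R →+* R}
    {σ' : AddMonoidAlgebra R (Fin n → ℤ) →+* AddMonoidAlgebra R (Fin n → ℤ)}
    (hσ' : ∀ (u : Fin n → ℤ) (r : R),
      σ' (AddMonoidAlgebra.single u r) = AddMonoidAlgebra.single ((p : ℤ) • u) (σ r))
    (g : AddMonoidAlgebra R (Fin n → ℤ)) :
    NP (σ' g) ⊆ (p : ℝ) • NP g := by
  classical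
  refine convexHull_min ?_ ((NP_convex g).smul _)
  rintro _ ⟨u, hu, rfl⟩
  have hrepr : σ' g = ∑ v ∈ g.coeff.support, AddMonoidAlgebra.single ((p : ℤ) • v) (σ (g.coeff v)) := by
    conv_lhs => rw [← AddMonoidAlgebra.sum_coeff_single g]
    rw [Finsupp.sum, map_sum]
    exact Finset.sum_congr rfl fun v _ => hσ' v (g.coeff v)
  rw [hrepr, AddMonoidAlgebra.coeff_sum] at hu
  obtain ⟨v, hv, hu'⟩ := Finset.mem_biUnion.mp (Finsupp.support_finset_sum hu)
  have : u = (p : ℤ) • v := by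
    have := Finsupp.support_single_subset hu'
    simpa using this
  rw [this, toRfun_zsmul]
  exact Set.smul_mem_smul_set (mem_NP hv)

private lemma NP_sigma_iter {p : ℕ} {σ : R →+* R}
    {σ' : AddMonoidAlgebra R (Fin n → ℤ) →+* AddMonoidAlgebra R (Fin n → ℤ)}
    (hσ' : ∀ (u : Fin n → ℤ) (r : R),
      σ' (AddMonoidAlgebra.single u r) = AddMonoidAlgebra.single ((p : ℤ) • u) (σ r))
    (g : AddMonoidAlgebra R (Fin n → ℤ)) (i : ℕ) :
    NP ((⇑σ')^[i] g) ⊆ ((p : ℝ) ^ i) • NP g := by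
  induction i with
  | zero => simp [one_smul]
  | succ i ih =>
      calc NP ((⇑σ')^[i + 1] g) = NP (σ' ((⇑σ')^[i] g)) := by
            rw [Function.iterate_succ_apply']
        _ ⊆ (p : ℝ) • NP ((⇑σ')^[i] g) := NP_sigma hσ' _
        _ ⊆ (p : ℝ) • (((p : ℝ) ^ i) • NP g) := Set.smul_set_mono ih
        _ = ((p : ℝ) ^ (i + 1)) • NP g := by rw [smul_smul, pow_succ, mul_comm]

end Aux

/-- Lemma 2 of the paper: the Newton polytope of `δ s f` is contained
in `(p^s - 1) · Δ(f)`. Laurent polynomials in `n` variables are modelled as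
`AddMonoidAlgebra R (Fin n → ℤ)`; the Newton polytope of `g` is the convex hull in
`ℝⁿ` of the support of `g`. -/
theorem newton_polytope_delta {R : Type*} [CommRing R] {n : ℕ} (p : ℕ) (hp : p.Prime)
    (σ : R →+* R) (hσ : ∀ r : R, σ r - r ^ p ∈ Ideal.span {(p : R)})
    (σ' : AddMonoidAlgebra R (Fin n → ℤ) →+* AddMonoidAlgebra R (Fin n → ℤ))
    (hσ' : ∀ (u : Fin n → ℤ) (r : R),
      σ' (AddMonoidAlgebra.single u r) = AddMonoidAlgebra.single ((p : ℤ) • u) (σ r))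
    (f : AddMonoidAlgebra R (Fin n → ℤ))
    (δ : ℕ → AddMonoidAlgebra R (Fin n → ℤ))
    (hδ : ∀ s : ℕ, 1 ≤ s →
      f ^ (p ^ s - 1) = ∑ i ∈ Finset.Icc 1 s, δ i * (⇑σ')^[i] (f ^ (p ^ (s - i) - 1)))
    -- the Newton polytope of a Laurent polynomial
    (Δ : AddMonoidAlgebra R (Fin n → ℤ) → Set (Fin n → ℝ))
    (hΔ : ∀ g : AddMonoidAlgebra R (Fin n → ℤ),
      Δ g = convexHull ℝ ((fun (w : Fin n → ℤ) (i : Fin n) => (w i : ℝ)) '' g.coeff.support))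
    (s : ℕ) (hs : 1 ≤ s) :
    Δ (δ s) ⊆ ((p : ℝ) ^ s - 1) • Δ f := by
  classical
  have hΔNP : ∀ g : AddMonoidAlgebra R (Fin n → ℤ), Δ g = NP g := fun g => hΔ g
  have hp1 : 1 ≤ p := hp.one_lt.le
  have hp1R : (1 : ℝ) ≤ (p : ℝ) := by exact_mod_cast hp1
  -- cast lemma: for m ≥ 1, ((p^m - 1 : ℕ) : ℝ) = (p:ℝ)^m - 1
  have hcast : ∀ m : ℕ, ((p ^ m - 1 : ℕ) : ℝ) = (p : ℝ) ^ m - 1 := by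
    intro m
    have : 1 ≤ p ^ m := Nat.one_le_pow _ _ hp.pos
    push_cast [Nat.cast_sub this]
    ring
  have main : ∀ s : ℕ, 1 ≤ s → NP (δ s) ⊆ ((p : ℝ) ^ s - 1) • NP f := by
    intro s
    induction s using Nat.strong_induction_on with
    | _ s ih =>
      intro hs
      obtain ⟨t, rfl⟩ : ∃ t, s = t + 1 := ⟨s - 1, (Nat.succ_pred_eq_of_pos hs).symm⟩
      -- rearrange the defining relation
      have hterm : δ (t + 1) * (⇑σ')^[t + 1] (f ^ (p ^ ((t + 1) - (t + 1)) - 1))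
          = δ (t + 1) := by
        have h0 : p ^ ((t + 1) - (t + 1)) - 1 = 0 := by simp
        rw [h0, pow_zero, Function.iterate_fixed (map_one σ') (t + 1), mul_one]
      have key : δ (t + 1) = f ^ (p ^ (t + 1) - 1)
          - ∑ i ∈ Finset.Icc 1 t, δ i * (⇑σ')^[i] (f ^ (p ^ ((t + 1) - i) - 1)) := by
        have h := hδ (t + 1) hs
        rw [Finset.sum_Icc_succ_top (by omega), hterm] at h
        exact eq_sub_of_add_eq' h.symm
      have hDconv : Convex ℝ (((p : ℝ) ^ (t + 1) - 1) • NP f) := (NP_convex f).smul _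
      rw [key]
      refine convexHull_min ?_ hDconv
      rintro _ ⟨u, hu, rfl⟩
      have hu' := Finsupp.support_sub hu
      rcases Finset.mem_union.mp hu' with h1 | h2
      · -- u in the support of f ^ (p ^ (t+1) - 1)
        have h1le : 1 ≤ p ^ (t + 1) - 1 := by
          have h2p : 2 ≤ p := hp.two_le
          have : 2 ≤ p ^ (t + 1) := le_trans h2p (Nat.le_self_pow (by omega) p)
          omega
        have := NP_pow f (p ^ (t + 1) - 1) h1le (mem_NP h1)
        rwa [hcast (t + 1)] at this
      · -- u in the support of the big sum
        replace h2 : u ∈ (∑ i ∈ Finset.Icc 1 t,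
            (δ i * (⇑σ')^[i] (f ^ (p ^ ((t + 1) - i) - 1))).coeff).support := by
          rw [← AddMonoidAlgebra.coeff_sum]; exact h2
        obtain ⟨i, hi, hu2⟩ := Finset.mem_biUnion.mp (Finsupp.support_finset_sum h2)
        rw [Finset.mem_Icc] at hi
        have hilt : i < t + 1 := by omega
        have hpi1 : (1 : ℝ) ≤ (p : ℝ) ^ i := one_le_pow₀ hp1R
        have hpsi1 : (1 : ℝ) ≤ (p : ℝ) ^ ((t + 1) - i) := one_le_pow₀ hp1R
        have hpi0 : (0 : ℝ) ≤ (p : ℝ) ^ i := by positivity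
        have ha : (0 : ℝ) ≤ (p : ℝ) ^ i - 1 := by linarith
        have hb : (0 : ℝ) ≤ (p : ℝ) ^ i * ((p : ℝ) ^ ((t + 1) - i) - 1) := by nlinarith
        have hsc : ((p : ℝ) ^ i - 1) + (p : ℝ) ^ i * ((p : ℝ) ^ ((t + 1) - i) - 1)
            = (p : ℝ) ^ (t + 1) - 1 := by
          have hpp : (p : ℝ) ^ i * (p : ℝ) ^ ((t + 1) - i) = (p : ℝ) ^ (t + 1) := by
            rw [← pow_add]; congr 1; omega
          linear_combination hpp
        have hsub : NP (δ i * (⇑σ')^[i] (f ^ (p ^ ((t + 1) - i) - 1)))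
            ⊆ ((p : ℝ) ^ (t + 1) - 1) • NP f := by
          have hkle : 1 ≤ p ^ ((t + 1) - i) - 1 := by
            have h2p : 2 ≤ p := hp.two_le
            have : 2 ≤ p ^ ((t + 1) - i) := le_trans h2p (Nat.le_self_pow (by omega) p)
            omega
          calc NP (δ i * (⇑σ')^[i] (f ^ (p ^ ((t + 1) - i) - 1)))
              ⊆ NP (δ i) + NP ((⇑σ')^[i] (f ^ (p ^ ((t + 1) - i) - 1))) := NP_mul _ _
            _ ⊆ ((p : ℝ) ^ i - 1) • NP f
                + ((p : ℝ) ^ i) • (((p ^ ((t + 1) - i) - 1 : ℕ) : ℝ) • NP f) := by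
                refine Set.add_subset_add (ih i hilt hi.1) ?_
                refine (NP_sigma_iter hσ' _ i).trans (Set.smul_set_mono ?_)
                exact NP_pow f _ hkle
            _ = ((p : ℝ) ^ i - 1) • NP f
                + ((p : ℝ) ^ i * ((p : ℝ) ^ ((t + 1) - i) - 1)) • NP f := by
                rw [smul_smul, hcast ((t + 1) - i)]
            _ = ((p : ℝ) ^ (t + 1) - 1) • NP f := by
                rw [← (NP_convex f).add_smul ha hb, hsc]
        exact hsub (mem_NP hu2)
  rw [hΔNP, hΔNP]
  exact main s hs
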